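/- Let Ω ⊆ ℂ be an open set, φ₁, φ₂ : ℂ → ℂ holomorphic on Ω, let μ > 0 and λ̃ ∈ ℝ with λ̃ + μ ≠ 0, and set κ = (λ̃ + 3μ)/(λ̃ + μ). Define the displacement field u = (u_x, u_y) on Ω by u_x(z) = (1/(2μ)) Re( κ φ₁(z) − z · conj(φ₁'(z)) − conj(φ₂(z)) ) and u_y(z) = (1/(2μ)) Im( κ φ₁(z) − z · conj(φ₁'(z)) − conj(φ₂(z)) ), where φ₁' is the complex derivative of φ₁. Then u satisfies the homogeneous Navier equations of plane linear elasticity on Ω: μ ∇²u_x + (λ̃ + μ) ∂/∂x ( ∂u_x/∂x + ∂u_y/∂y ) = 0 and μ ∇²u_y + (λ̃ + μ) ∂/∂y ( ∂u_x/∂x + ∂u_y/∂y ) = 0, where ∇² = ∂²/∂x² + ∂²/∂y² and partial derivatives are directional derivatives along 1 and i. -/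

import Mathlib

/-- Directional derivative along `v` of a real-valued function on `ℂ`. -/
noncomputable def ld (v : ℂ) (f : ℂ → ℝ) (z : ℂ) : ℝ := lineDeriv ℝ f z v

open Complex

lemma keyC (a b c : ℂ → ℂ) (a' b' c' : ℂ) (z v : ℂ)
    (ha : HasDerivAt a a' z) (hb : HasDerivAt b b' z) (hc : HasDerivAt c c' z) :
    HasDerivAt (fun t : ℝ => a (z + t • v) - (z + t • v) * (starRingEnd ℂ) (b (z + t • v))
      - (starRingEnd ℂ) (c (z + t • v)))
      (v * a' - (v * (starRingEnd ℂ) (b z) + z * (starRingEnd ℂ) (v * b'))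
        - (starRingEnd ℂ) (v * c')) 0 := by
  have hza : z + (0:ℝ) • v = z := by simp
  have hline : HasDerivAt (fun t : ℝ => z + t • v) v 0 := by
    simpa using ((hasDerivAt_id (0:ℝ)).smul_const v).const_add z
  have ha0 : HasDerivAt a a' (z + (0:ℝ) • v) := by rw [hza]; exact ha
  have hb0 : HasDerivAt b b' (z + (0:ℝ) • v) := by rw [hza]; exact hb
  have hc0 : HasDerivAt c c' (z + (0:ℝ) • v) := by rw [hza]; exact hc
  have hA : HasDerivAt (fun t : ℝ => a (z + t • v)) (v • a') 0 :=
    HasDerivAt.scomp (0:ℝ) ha0 hline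
  have hB : HasDerivAt (fun t : ℝ => b (z + t • v)) (v • b') 0 :=
    HasDerivAt.scomp (0:ℝ) hb0 hline
  have hC : HasDerivAt (fun t : ℝ => c (z + t • v)) (v • c') 0 :=
    HasDerivAt.scomp (0:ℝ) hc0 hline
  have hBc : HasDerivAt (fun t : ℝ => (starRingEnd ℂ) (b (z + t • v)))
      ((starRingEnd ℂ) (v * b')) 0 := by
    have := (Complex.conjCLE.hasFDerivAt.comp_hasDerivAt (0:ℝ) hB)
    simp [smul_eq_mul] at this ⊢
    exact this
  have hCc : HasDerivAt (fun t : ℝ => (starRingEnd ℂ) (c (z + t • v)))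
      ((starRingEnd ℂ) (v * c')) 0 := by
    have := (Complex.conjCLE.hasFDerivAt.comp_hasDerivAt (0:ℝ) hC)
    simp [smul_eq_mul] at this ⊢
    exact this
  have hmul : HasDerivAt (fun t : ℝ => (z + t • v) * (starRingEnd ℂ) (b (z + t • v)))
      (v * (starRingEnd ℂ) (b z) + z * (starRingEnd ℂ) (v * b')) 0 := by
    have := hline.mul hBc
    simp [hza] at this ⊢
    exact this
  have := (hA.sub hmul).sub hCc
  simp [smul_eq_mul] at this ⊢
  exact this

lemma key_re (a b c : ℂ → ℂ) (a' b' c' : ℂ) (r : ℝ) (z v : ℂ)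
    (ha : HasDerivAt a a' z) (hb : HasDerivAt b b' z) (hc : HasDerivAt c c' z) :
    HasLineDerivAt ℝ (fun w => r * (a w - w * (starRingEnd ℂ) (b w) - (starRingEnd ℂ) (c w)).re)
      (r * (v * a' - (v * (starRingEnd ℂ) (b z) + z * (starRingEnd ℂ) (v * b'))
        - (starRingEnd ℂ) (v * c')).re) z v := by
  have h := keyC a b c a' b' c' z v ha hb hc
  have h2 := (Complex.reCLM.hasFDerivAt.comp_hasDerivAt (0:ℝ) h).const_mul r
  unfold HasLineDerivAt
  simp only [Complex.real_smul]
  exact h2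

lemma key_im (a b c : ℂ → ℂ) (a' b' c' : ℂ) (r : ℝ) (z v : ℂ)
    (ha : HasDerivAt a a' z) (hb : HasDerivAt b b' z) (hc : HasDerivAt c c' z) :
    HasLineDerivAt ℝ (fun w => r * (a w - w * (starRingEnd ℂ) (b w) - (starRingEnd ℂ) (c w)).im)
      (r * (v * a' - (v * (starRingEnd ℂ) (b z) + z * (starRingEnd ℂ) (v * b'))
        - (starRingEnd ℂ) (v * c')).im) z v := by
  have h := keyC a b c a' b' c' z v ha hb hc
  have h2 := (Complex.imCLM.hasFDerivAt.comp_hasDerivAt (0:ℝ) h).const_mul r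
  unfold HasLineDerivAt
  simp only [Complex.real_smul]
  exact h2

/-- The Kolosov–Muskhelishvili displacement representation satisfies the homogeneous
Navier equations of plane linear elasticity. -/
theorem kolosov_muskhelishvili_displacements
    (Ω : Set ℂ) (hΩo : IsOpen Ω) (φ₁ φ₂ : ℂ → ℂ)
    (hφ₁ : DifferentiableOn ℂ φ₁ Ω) (hφ₂ : DifferentiableOn ℂ φ₂ Ω)
    (μ lam : ℝ) (hμ : 0 < μ) (hlam : lam + μ ≠ 0)
    (κ : ℝ) (hκ : κ = (lam + 3 * μ) / (lam + μ))
    (ux uy : ℂ → ℝ)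
    (hux : ∀ z, ux z = (1 / (2 * μ)) *
      ((κ : ℂ) * φ₁ z - z * (starRingEnd ℂ) (deriv φ₁ z) - (starRingEnd ℂ) (φ₂ z)).re)
    (huy : ∀ z, uy z = (1 / (2 * μ)) *
      ((κ : ℂ) * φ₁ z - z * (starRingEnd ℂ) (deriv φ₁ z) - (starRingEnd ℂ) (φ₂ z)).im) :
    ∀ z ∈ Ω,
      μ * (ld 1 (ld 1 ux) z + ld Complex.I (ld Complex.I ux) z)
        + (lam + μ) * ld 1 (fun w => ld 1 ux w + ld Complex.I uy w) z = 0 ∧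
      μ * (ld 1 (ld 1 uy) z + ld Complex.I (ld Complex.I uy) z)
        + (lam + μ) * ld Complex.I (fun w => ld 1 ux w + ld Complex.I uy w) z = 0 := by
  intro z hz
  have hA1 : AnalyticOnNhd ℂ φ₁ Ω := hφ₁.analyticOnNhd hΩo
  have hA2 : AnalyticOnNhd ℂ φ₂ Ω := hφ₂.analyticOnNhd hΩo
  have hA1' : AnalyticOnNhd ℂ (deriv φ₁) Ω := hA1.deriv
  have hA1'' : AnalyticOnNhd ℂ (deriv (deriv φ₁)) Ω := hA1'.deriv
  have hA2' : AnalyticOnNhd ℂ (deriv φ₂) Ω := hA2.deriv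
  have hd1 : ∀ w ∈ Ω, HasDerivAt φ₁ (deriv φ₁ w) w :=
    fun w hw => (hA1 w hw).differentiableAt.hasDerivAt
  have hd2 : ∀ w ∈ Ω, HasDerivAt (deriv φ₁) (deriv (deriv φ₁) w) w :=
    fun w hw => (hA1' w hw).differentiableAt.hasDerivAt
  have hd3 : ∀ w ∈ Ω, HasDerivAt (deriv (deriv φ₁)) (deriv (deriv (deriv φ₁)) w) w :=
    fun w hw => (hA1'' w hw).differentiableAt.hasDerivAt
  have he1 : ∀ w ∈ Ω, HasDerivAt φ₂ (deriv φ₂ w) w :=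
    fun w hw => (hA2 w hw).differentiableAt.hasDerivAt
  have he2 : ∀ w ∈ Ω, HasDerivAt (deriv φ₂) (deriv (deriv φ₂) w) w :=
    fun w hw => (hA2' w hw).differentiableAt.hasDerivAt
  have huxf : ux = fun w => (1 / (2 * μ)) *
      ((κ : ℂ) * φ₁ w - w * (starRingEnd ℂ) (deriv φ₁ w) - (starRingEnd ℂ) (φ₂ w)).re :=
    funext hux
  have huyf : uy = fun w => (1 / (2 * μ)) *
      ((κ : ℂ) * φ₁ w - w * (starRingEnd ℂ) (deriv φ₁ w) - (starRingEnd ℂ) (φ₂ w)).im :=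
    funext huy
  -- first-level template
  set T : ℂ → ℂ → ℂ := fun v w =>
    v * ((κ : ℂ) * deriv φ₁ w) - w * (starRingEnd ℂ) (v * deriv (deriv φ₁) w)
      - (starRingEnd ℂ) (v * deriv φ₂ w + (starRingEnd ℂ) v * deriv φ₁ w) with hT
  have L1re : ∀ v : ℂ, ∀ w ∈ Ω, ld v ux w = (1 / (2 * μ)) * (T v w).re := by
    intro v w hw
    have h := key_re (fun w => (κ : ℂ) * φ₁ w) (deriv φ₁) φ₂
      ((κ : ℂ) * deriv φ₁ w) (deriv (deriv φ₁) w) (deriv φ₂ w) (1 / (2 * μ)) w v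
      ((hd1 w hw).const_mul (κ : ℂ)) (hd2 w hw) (he1 w hw)
    have h2 : lineDeriv ℝ ux w v = (1 / (2 * μ)) *
        (v * ((κ : ℂ) * deriv φ₁ w)
          - (v * (starRingEnd ℂ) (deriv φ₁ w) + w * (starRingEnd ℂ) (v * deriv (deriv φ₁) w))
          - (starRingEnd ℂ) (v * deriv φ₂ w)).re := by
      rw [huxf]; exact h.lineDeriv
    unfold ld
    rw [h2, hT]
    congr 1
    congr 1
    simp only [map_add, map_mul, Complex.conj_conj]
    ring
  have L1im : ∀ v : ℂ, ∀ w ∈ Ω, ld v uy w = (1 / (2 * μ)) * (T v w).im := by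
    intro v w hw
    have h := key_im (fun w => (κ : ℂ) * φ₁ w) (deriv φ₁) φ₂
      ((κ : ℂ) * deriv φ₁ w) (deriv (deriv φ₁) w) (deriv φ₂ w) (1 / (2 * μ)) w v
      ((hd1 w hw).const_mul (κ : ℂ)) (hd2 w hw) (he1 w hw)
    have h2 : lineDeriv ℝ uy w v = (1 / (2 * μ)) *
        (v * ((κ : ℂ) * deriv φ₁ w)
          - (v * (starRingEnd ℂ) (deriv φ₁ w) + w * (starRingEnd ℂ) (v * deriv (deriv φ₁) w))
          - (starRingEnd ℂ) (v * deriv φ₂ w)).im := by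
      rw [huyf]; exact h.lineDeriv
    unfold ld
    rw [h2, hT]
    congr 1
    congr 1
    simp only [map_add, map_mul, Complex.conj_conj]
    ring
  -- second-level value
  set S : ℂ → ℂ → ℂ := fun u v =>
    u * (v * ((κ : ℂ) * deriv (deriv φ₁) z))
      - (u * (starRingEnd ℂ) (v * deriv (deriv φ₁) z)
        + z * (starRingEnd ℂ) (u * (v * deriv (deriv (deriv φ₁)) z)))
      - (starRingEnd ℂ) (u * (v * deriv (deriv φ₂) z
        + (starRingEnd ℂ) v * deriv (deriv φ₁) z)) with hS
  have keyTre : ∀ u v : ℂ, HasLineDerivAt ℝ (fun w => (1 / (2 * μ)) * (T v w).re)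
      ((1 / (2 * μ)) * (S u v).re) z u := by
    intro u v
    exact key_re (fun w => v * ((κ : ℂ) * deriv φ₁ w))
      (fun w => v * deriv (deriv φ₁) w)
      (fun w => v * deriv φ₂ w + (starRingEnd ℂ) v * deriv φ₁ w)
      (v * ((κ : ℂ) * deriv (deriv φ₁) z)) (v * deriv (deriv (deriv φ₁)) z)
      (v * deriv (deriv φ₂) z + (starRingEnd ℂ) v * deriv (deriv φ₁) z)
      (1 / (2 * μ)) z u
      (((hd2 z hz).const_mul (κ : ℂ)).const_mul v)
      ((hd3 z hz).const_mul v)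
      (((he2 z hz).const_mul v).add ((hd2 z hz).const_mul ((starRingEnd ℂ) v)))
  have keyTim : ∀ u v : ℂ, HasLineDerivAt ℝ (fun w => (1 / (2 * μ)) * (T v w).im)
      ((1 / (2 * μ)) * (S u v).im) z u := by
    intro u v
    exact key_im (fun w => v * ((κ : ℂ) * deriv φ₁ w))
      (fun w => v * deriv (deriv φ₁) w)
      (fun w => v * deriv φ₂ w + (starRingEnd ℂ) v * deriv φ₁ w)
      (v * ((κ : ℂ) * deriv (deriv φ₁) z)) (v * deriv (deriv (deriv φ₁)) z)
      (v * deriv (deriv φ₂) z + (starRingEnd ℂ) v * deriv (deriv φ₁) z)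
      (1 / (2 * μ)) z u
      (((hd2 z hz).const_mul (κ : ℂ)).const_mul v)
      ((hd3 z hz).const_mul v)
      (((he2 z hz).const_mul v).add ((hd2 z hz).const_mul ((starRingEnd ℂ) v)))
  have L2re : ∀ u v : ℂ, ld u (ld v ux) z = (1 / (2 * μ)) * (S u v).re := by
    intro u v
    have hEq : (ld v ux) =ᶠ[nhds z] (fun w => (1 / (2 * μ)) * (T v w).re) :=
      Filter.eventuallyEq_of_mem (hΩo.mem_nhds hz) (fun w hw => L1re v w hw)
    show lineDeriv ℝ (ld v ux) z u = _
    rw [hEq.lineDeriv_eq]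
    exact (keyTre u v).lineDeriv
  have L2im : ∀ u v : ℂ, ld u (ld v uy) z = (1 / (2 * μ)) * (S u v).im := by
    intro u v
    have hEq : (ld v uy) =ᶠ[nhds z] (fun w => (1 / (2 * μ)) * (T v w).im) :=
      Filter.eventuallyEq_of_mem (hΩo.mem_nhds hz) (fun w hw => L1im v w hw)
    show lineDeriv ℝ (ld v uy) z u = _
    rw [hEq.lineDeriv_eq]
    exact (keyTim u v).lineDeriv
  have Ldiv : ∀ u : ℂ, ld u (fun w => ld 1 ux w + ld Complex.I uy w) z =
      (1 / (2 * μ)) * (S u 1).re + (1 / (2 * μ)) * (S u Complex.I).im := by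
    intro u
    have hEq : (fun w => ld 1 ux w + ld Complex.I uy w) =ᶠ[nhds z]
        (fun w => (1 / (2 * μ)) * (T 1 w).re + (1 / (2 * μ)) * (T Complex.I w).im) :=
      Filter.eventuallyEq_of_mem (hΩo.mem_nhds hz)
        (fun w hw => by rw [L1re 1 w hw, L1im Complex.I w hw])
    show lineDeriv ℝ (fun w => ld 1 ux w + ld Complex.I uy w) z u = _
    rw [hEq.lineDeriv_eq]
    have hadd : HasLineDerivAt ℝ
        (fun w => (1 / (2 * μ)) * (T 1 w).re + (1 / (2 * μ)) * (T Complex.I w).im)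
        ((1 / (2 * μ)) * (S u 1).re + (1 / (2 * μ)) * (S u Complex.I).im) z u :=
      HasDerivAt.add (keyTre u 1) (keyTim u Complex.I)
    exact hadd.lineDeriv
  have h2 : (2:ℝ) * μ ≠ 0 := by positivity
  constructor
  · rw [L2re 1 1, L2re Complex.I Complex.I, Ldiv 1]
    subst hκ
    simp only [hS, Complex.mul_re, Complex.mul_im, Complex.add_re, Complex.add_im,
      Complex.sub_re, Complex.sub_im, Complex.conj_re, Complex.conj_im, Complex.I_re,
      Complex.I_im, Complex.ofReal_re, Complex.ofReal_im, Complex.one_re, Complex.one_im]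
    field_simp
    ring
  · rw [L2im 1 1, L2im Complex.I Complex.I, Ldiv Complex.I]
    subst hκ
    simp only [hS, Complex.mul_re, Complex.mul_im, Complex.add_re, Complex.add_im,
      Complex.sub_re, Complex.sub_im, Complex.conj_re, Complex.conj_im, Complex.I_re,
      Complex.I_im, Complex.ofReal_re, Complex.ofReal_im, Complex.one_re, Complex.one_im]
    field_simp
    ring
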